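/- arXiv:2305.04604 — 4 statements merged into one kernel-verified Lean document; each statement's English description precedes it below -/
import Mathlib

section
/- If the divergence measure D(·‖·) is convex in its second argument, then the rate-distortion-perception function R(D,P) is jointly convex in (D,P): for λ ∈ [0,1], R(λD₁+(1-λ)D₂, λP₁+(1-λ)P₂) ≤ λR(D₁,P₁) + (1-λ)R(D₂,P₂). -/
open Finset

private lemma log_mono_term (a b t : ℝ) (ha : 0 ≤ a) (hb : 0 < a → 0 < b) (hbt : b ≤ t) :
    a * Real.log (a / t) ≤ a * Real.log (a / b) := by
  rcases eq_or_lt_of_le ha with h | h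
  · simp [← h]
  · have hb' := hb h
    have ht : 0 < t := lt_of_lt_of_le hb' hbt
    have h1 : a / t ≤ a / b := by gcongr
    have h2 : 0 < a / t := div_pos h ht
    exact mul_le_mul_of_nonneg_left (Real.log_le_log h2 h1) ha

private lemma log_sum_two (a₁ a₂ b₁ b₂ : ℝ) (ha₁ : 0 ≤ a₁) (ha₂ : 0 ≤ a₂)
    (hb₁ : 0 ≤ b₁) (hb₂ : 0 ≤ b₂) (h₁ : 0 < a₁ → 0 < b₁) (h₂ : 0 < a₂ → 0 < b₂) :
    (a₁ + a₂) * Real.log ((a₁ + a₂) / (b₁ + b₂)) ≤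
      a₁ * Real.log (a₁ / b₁) + a₂ * Real.log (a₂ / b₂) := by
  rcases eq_or_lt_of_le ha₁ with e₁ | e₁
  · simp only [← e₁, zero_add, zero_mul]
    have := log_mono_term a₂ b₂ (b₁ + b₂) ha₂ h₂ (by linarith)
    linarith
  rcases eq_or_lt_of_le ha₂ with e₂ | e₂
  · simp only [← e₂, add_zero, zero_mul]
    have := log_mono_term a₁ b₁ (b₁ + b₂) ha₁ h₁ (by linarith)
    linarith
  · have hb₁' := h₁ e₁
    have hb₂' := h₂ e₂
    have hs : 0 < a₁ + a₂ := by linarith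
    have ht : 0 < b₁ + b₂ := by linarith
    have key : ∀ a b : ℝ, 0 < a → 0 < b →
        a - b * (a₁ + a₂) / (b₁ + b₂) ≤
          a * Real.log (a / b) - a * Real.log ((a₁ + a₂) / (b₁ + b₂)) := by
      intro a b ha hb
      have hx : 0 < b * (a₁ + a₂) / (a * (b₁ + b₂)) := by positivity
      have hlog := Real.log_le_sub_one_of_pos hx
      have heq : Real.log (a / b) - Real.log ((a₁ + a₂) / (b₁ + b₂)) =
          - Real.log (b * (a₁ + a₂) / (a * (b₁ + b₂))) := by
        rw [Real.log_div (mul_pos hb hs).ne' (mul_pos ha ht).ne',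
            Real.log_div ha.ne' hb.ne', Real.log_div hs.ne' ht.ne',
            Real.log_mul hb.ne' hs.ne', Real.log_mul ha.ne' ht.ne']
        ring
      have hmul := mul_le_mul_of_nonneg_left hlog ha.le
      have hexp : a * (b * (a₁ + a₂) / (a * (b₁ + b₂)) - 1) =
          b * (a₁ + a₂) / (b₁ + b₂) - a := by
        field_simp
      have : a * Real.log (a / b) - a * Real.log ((a₁ + a₂) / (b₁ + b₂)) =
          a * (- Real.log (b * (a₁ + a₂) / (a * (b₁ + b₂)))) := by
        rw [← heq]; ring
      rw [this]
      nlinarith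
    have k₁ := key a₁ b₁ e₁ hb₁'
    have k₂ := key a₂ b₂ e₂ hb₂'
    have hsum : b₁ * (a₁ + a₂) / (b₁ + b₂) + b₂ * (a₁ + a₂) / (b₁ + b₂) = a₁ + a₂ := by
      field_simp
    have hdist : (a₁ + a₂) * Real.log ((a₁ + a₂) / (b₁ + b₂)) =
        a₁ * Real.log ((a₁ + a₂) / (b₁ + b₂)) + a₂ * Real.log ((a₁ + a₂) / (b₁ + b₂)) := by
      ring
    linarith

private lemma mi_nonneg {X : Type*} [Fintype X] (p : X → ℝ) (hp : ∀ x, 0 ≤ p x)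
    (hps : ∑ x, p x = 1) (Q : X → X → ℝ) (hQ : ∀ x y, 0 ≤ Q x y)
    (hQs : ∀ x, ∑ y, Q x y = 1) :
    0 ≤ ∑ x, ∑ y, p x * Q x y * Real.log (Q x y / (∑ x', p x' * Q x' y)) := by
  have hq : ∀ y, 0 ≤ ∑ x', p x' * Q x' y := fun y =>
    Finset.sum_nonneg fun i _ => mul_nonneg (hp i) (hQ i y)
  have hqsum : ∑ y, (∑ x', p x' * Q x' y) = 1 := by
    rw [Finset.sum_comm]
    have h1 : ∀ x' : X, ∑ y, p x' * Q x' y = p x' := by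
      intro x'; rw [← Finset.mul_sum, hQs, mul_one]
    rw [Finset.sum_congr rfl fun x' _ => h1 x', hps]
  have hterm : ∀ x y, p x * Q x y - p x * (∑ x', p x' * Q x' y) ≤
      p x * Q x y * Real.log (Q x y / (∑ x', p x' * Q x' y)) := by
    intro x y
    rcases eq_or_lt_of_le (hp x) with hpx | hpx
    · simp [← hpx]
    rcases eq_or_lt_of_le (hQ x y) with hQxy | hQxy
    · simp only [← hQxy, mul_zero, zero_sub, zero_mul]
      have := mul_nonneg (hp x) (hq y)
      linarith
    · have hqy : 0 < ∑ x', p x' * Q x' y := by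
        have hle : p x * Q x y ≤ ∑ x', p x' * Q x' y :=
          Finset.single_le_sum (f := fun x' => p x' * Q x' y)
            (fun i _ => mul_nonneg (hp i) (hQ i y)) (Finset.mem_univ x)
        exact lt_of_lt_of_le (mul_pos hpx hQxy) hle
      have hx : 0 < (∑ x', p x' * Q x' y) / Q x y := div_pos hqy hQxy
      have hlog := Real.log_le_sub_one_of_pos hx
      have heq : Real.log (Q x y / (∑ x', p x' * Q x' y)) =
          - Real.log ((∑ x', p x' * Q x' y) / Q x y) := by
        rw [Real.log_div hQxy.ne' hqy.ne', Real.log_div hqy.ne' hQxy.ne']; ring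
      rw [heq]
      have hmul := mul_le_mul_of_nonneg_left hlog (mul_nonneg (hp x) (hQ x y))
      have hfe : p x * Q x y * ((∑ x', p x' * Q x' y) / Q x y - 1) =
          p x * (∑ x', p x' * Q x' y) - p x * Q x y := by
        field_simp
      nlinarith
  have hlow : ∑ x, ∑ y, (p x * Q x y - p x * (∑ x', p x' * Q x' y)) = 0 := by
    have : ∀ x : X, ∑ y, (p x * Q x y - p x * (∑ x', p x' * Q x' y)) = 0 := by
      intro x
      rw [Finset.sum_sub_distrib, ← Finset.mul_sum, ← Finset.mul_sum, hQs, hqsum]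
      ring
    rw [Finset.sum_congr rfl fun x _ => this x, Finset.sum_const, smul_zero]
  calc (0:ℝ) = ∑ x, ∑ y, (p x * Q x y - p x * (∑ x', p x' * Q x' y)) := hlow.symm
    _ ≤ _ := Finset.sum_le_sum fun x _ => Finset.sum_le_sum fun y _ => hterm x y

private def FS {X : Type*} [Fintype X] (p : X → ℝ) (d : X → X → ℝ)
    (Div : (X → ℝ) → (X → ℝ) → ℝ) (D P : ℝ) : Set ℝ :=
  { r : ℝ | ∃ Q : X → X → ℝ,
      (∀ x y, 0 ≤ Q x y) ∧ (∀ x, ∑ y, Q x y = 1) ∧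
      (∑ x, ∑ y, p x * Q x y * d x y) ≤ D ∧
      Div p (fun y => ∑ x, p x * Q x y) ≤ P ∧
      r = ∑ x, ∑ y, p x * Q x y *
            Real.log (Q x y / (∑ x', p x' * Q x' y)) }

private lemma FS_bdd {X : Type*} [Fintype X] (p : X → ℝ) (hp : ∀ x, 0 ≤ p x)
    (hps : ∑ x, p x = 1) (d : X → X → ℝ)
    (Div : (X → ℝ) → (X → ℝ) → ℝ) (D P : ℝ) :
    BddBelow (FS p d Div D P) := by
  refine ⟨0, fun r hr => ?_⟩
  obtain ⟨Q, hQ, hQs, -, -, hrv⟩ := hr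
  rw [hrv]
  exact mi_nonneg p hp hps Q hQ hQs

private lemma sInf_combine {S₁ S₂ : Set ℝ} {A lam : ℝ} (h₁ : S₁.Nonempty) (h₂ : S₂.Nonempty)
    (hlam0 : 0 ≤ lam) (hlam1 : lam ≤ 1)
    (h : ∀ r₁ ∈ S₁, ∀ r₂ ∈ S₂, A ≤ lam * r₁ + (1 - lam) * r₂) :
    A ≤ lam * sInf S₁ + (1 - lam) * sInf S₂ := by
  have step1 : ∀ r₂ ∈ S₂, A ≤ lam * sInf S₁ + (1 - lam) * r₂ := by
    intro r₂ hr₂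
    rcases eq_or_lt_of_le hlam0 with h0 | h0
    · obtain ⟨r₁, hr₁⟩ := h₁
      have := h r₁ hr₁ r₂ hr₂
      simp only [← h0] at this ⊢
      linarith
    · have hdiv : (A - (1 - lam) * r₂) / lam ≤ sInf S₁ := by
        apply le_csInf h₁
        intro r₁ hr₁
        rw [div_le_iff₀ h0]
        have := h r₁ hr₁ r₂ hr₂
        linarith [mul_comm r₁ lam]
      rw [div_le_iff₀ h0] at hdiv
      nlinarith
  rcases eq_or_lt_of_le hlam1 with h1 | h1
  · obtain ⟨r₂, hr₂⟩ := h₂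
    have := step1 r₂ hr₂
    simp only [h1] at this ⊢
    linarith
  · have h1' : 0 < 1 - lam := by linarith
    have hdiv : (A - lam * sInf S₁) / (1 - lam) ≤ sInf S₂ := by
      apply le_csInf h₂
      intro r₂ hr₂
      rw [div_le_iff₀ h1']
      have := step1 r₂ hr₂
      nlinarith
    rw [div_le_iff₀ h1'] at hdiv
    nlinarith

private lemma FS_combine {X : Type*} [Fintype X] (p : X → ℝ) (hp : ∀ x, 0 ≤ p x)
    (hps : ∑ x, p x = 1) (d : X → X → ℝ)
    (Div : (X → ℝ) → (X → ℝ) → ℝ)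
    (hDivConv : ∀ a, ConvexOn ℝ Set.univ (fun q => Div a q))
    (D₁ D₂ P₁ P₂ : ℝ) (lam : ℝ) (hlam0 : 0 ≤ lam) (hlam1 : lam ≤ 1)
    (r₁ r₂ : ℝ) (hr₁ : r₁ ∈ FS p d Div D₁ P₁) (hr₂ : r₂ ∈ FS p d Div D₂ P₂) :
    ∃ r ∈ FS p d Div (lam * D₁ + (1 - lam) * D₂) (lam * P₁ + (1 - lam) * P₂),
      r ≤ lam * r₁ + (1 - lam) * r₂ := by
  obtain ⟨Q₁, hQ₁, hQ₁s, hQ₁d, hQ₁p, hr₁v⟩ := hr₁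
  obtain ⟨Q₂, hQ₂, hQ₂s, hQ₂d, hQ₂p, hr₂v⟩ := hr₂
  have hlam1' : 0 ≤ 1 - lam := by linarith
  set Q : X → X → ℝ := fun x y => lam * Q₁ x y + (1 - lam) * Q₂ x y with hQdef
  have hQnn : ∀ x y, 0 ≤ Q x y := fun x y =>
    add_nonneg (mul_nonneg hlam0 (hQ₁ x y)) (mul_nonneg hlam1' (hQ₂ x y))
  have hQsum : ∀ x, ∑ y, Q x y = 1 := by
    intro x
    simp only [hQdef, Finset.sum_add_distrib, ← Finset.mul_sum, hQ₁s, hQ₂s]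
    ring
  have hmarg : ∀ y, (∑ x, p x * Q x y) =
      lam * (∑ x, p x * Q₁ x y) + (1 - lam) * (∑ x, p x * Q₂ x y) := by
    intro y
    simp only [hQdef, Finset.mul_sum]
    rw [← Finset.sum_add_distrib]
    exact Finset.sum_congr rfl fun x _ => by ring
  -- distortion
  have hdist : (∑ x, ∑ y, p x * Q x y * d x y) ≤ lam * D₁ + (1 - lam) * D₂ := by
    have heq : (∑ x, ∑ y, p x * Q x y * d x y) =
        lam * (∑ x, ∑ y, p x * Q₁ x y * d x y) +
          (1 - lam) * (∑ x, ∑ y, p x * Q₂ x y * d x y) := by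
      simp only [hQdef, Finset.mul_sum]
      rw [← Finset.sum_add_distrib]
      refine Finset.sum_congr rfl fun x _ => ?_
      rw [← Finset.sum_add_distrib]
      exact Finset.sum_congr rfl fun y _ => by ring
    rw [heq]
    exact add_le_add (mul_le_mul_of_nonneg_left hQ₁d hlam0)
      (mul_le_mul_of_nonneg_left hQ₂d hlam1')
  -- perception
  have hperc : Div p (fun y => ∑ x, p x * Q x y) ≤ lam * P₁ + (1 - lam) * P₂ := by
    have hfun : (fun y => ∑ x, p x * Q x y) =
        lam • (fun y => ∑ x, p x * Q₁ x y) + (1 - lam) • (fun y => ∑ x, p x * Q₂ x y) := by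
      funext y
      simp only [Pi.add_apply, Pi.smul_apply, smul_eq_mul]
      exact hmarg y
    have hc := (hDivConv p).2 (Set.mem_univ (fun y => ∑ x, p x * Q₁ x y))
      (Set.mem_univ (fun y => ∑ x, p x * Q₂ x y)) hlam0 hlam1' (by ring)
    rw [hfun]
    simp only [smul_eq_mul] at hc
    calc Div p (lam • (fun y => ∑ x, p x * Q₁ x y) + (1 - lam) • (fun y => ∑ x, p x * Q₂ x y))
        ≤ lam * Div p (fun y => ∑ x, p x * Q₁ x y) +
            (1 - lam) * Div p (fun y => ∑ x, p x * Q₂ x y) := hc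
      _ ≤ lam * P₁ + (1 - lam) * P₂ :=
          add_le_add (mul_le_mul_of_nonneg_left hQ₁p hlam0)
            (mul_le_mul_of_nonneg_left hQ₂p hlam1')
  -- value
  have hval : (∑ x, ∑ y, p x * Q x y * Real.log (Q x y / (∑ x', p x' * Q x' y)))
      ≤ lam * r₁ + (1 - lam) * r₂ := by
    have hterm : ∀ x y, p x * Q x y * Real.log (Q x y / (∑ x', p x' * Q x' y)) ≤
        lam * (p x * Q₁ x y * Real.log (Q₁ x y / (∑ x', p x' * Q₁ x' y))) +
          (1 - lam) * (p x * Q₂ x y * Real.log (Q₂ x y / (∑ x', p x' * Q₂ x' y))) := by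
      intro x y
      rcases eq_or_lt_of_le (hp x) with hpx | hpx
      · simp [← hpx]
      · have key := log_sum_two (lam * Q₁ x y) ((1 - lam) * Q₂ x y)
          (lam * (∑ x', p x' * Q₁ x' y)) ((1 - lam) * (∑ x', p x' * Q₂ x' y))
          (mul_nonneg hlam0 (hQ₁ x y)) (mul_nonneg hlam1' (hQ₂ x y))
          (mul_nonneg hlam0 (Finset.sum_nonneg fun i _ => mul_nonneg (hp i) (hQ₁ i y)))
          (mul_nonneg hlam1' (Finset.sum_nonneg fun i _ => mul_nonneg (hp i) (hQ₂ i y)))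
          (by
            intro ha
            rcases eq_or_lt_of_le hlam0 with h | h
            · rw [← h, zero_mul] at ha; exact absurd ha (lt_irrefl 0)
            · have hQ₁pos : 0 < Q₁ x y := by
                by_contra hc
                push_neg at hc
                have : Q₁ x y = 0 := le_antisymm hc (hQ₁ x y)
                rw [this, mul_zero] at ha; exact absurd ha (lt_irrefl 0)
              have hle : p x * Q₁ x y ≤ ∑ x', p x' * Q₁ x' y :=
                Finset.single_le_sum (f := fun x' => p x' * Q₁ x' y)
                  (fun i _ => mul_nonneg (hp i) (hQ₁ i y)) (Finset.mem_univ x)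
              exact mul_pos h (lt_of_lt_of_le (mul_pos hpx hQ₁pos) hle))
          (by
            intro ha
            rcases eq_or_lt_of_le hlam1' with h | h
            · rw [← h, zero_mul] at ha; exact absurd ha (lt_irrefl 0)
            · have hQ₂pos : 0 < Q₂ x y := by
                by_contra hc
                push_neg at hc
                have : Q₂ x y = 0 := le_antisymm hc (hQ₂ x y)
                rw [this, mul_zero] at ha; exact absurd ha (lt_irrefl 0)
              have hle : p x * Q₂ x y ≤ ∑ x', p x' * Q₂ x' y :=
                Finset.single_le_sum (f := fun x' => p x' * Q₂ x' y)
                  (fun i _ => mul_nonneg (hp i) (hQ₂ i y)) (Finset.mem_univ x)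
              exact mul_pos h (lt_of_lt_of_le (mul_pos hpx hQ₂pos) hle))
        have e₁ : lam * Q₁ x y * Real.log (lam * Q₁ x y / (lam * (∑ x', p x' * Q₁ x' y))) =
            lam * (Q₁ x y * Real.log (Q₁ x y / (∑ x', p x' * Q₁ x' y))) := by
          rcases eq_or_lt_of_le hlam0 with h | h
          · simp [← h]
          · rw [mul_div_mul_left _ _ h.ne']; ring
        have e₂ : (1 - lam) * Q₂ x y *
              Real.log ((1 - lam) * Q₂ x y / ((1 - lam) * (∑ x', p x' * Q₂ x' y))) =
            (1 - lam) * (Q₂ x y * Real.log (Q₂ x y / (∑ x', p x' * Q₂ x' y))) := by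
          rcases eq_or_lt_of_le hlam1' with h | h
          · simp [← h]
          · rw [mul_div_mul_left _ _ h.ne']; ring
        rw [e₁, e₂] at key
        have hkey2 := mul_le_mul_of_nonneg_left key (hp x)
        have hQxy : Q x y = lam * Q₁ x y + (1 - lam) * Q₂ x y := rfl
        rw [hQxy, hmarg y]
        nlinarith [hkey2]
    calc (∑ x, ∑ y, p x * Q x y * Real.log (Q x y / (∑ x', p x' * Q x' y)))
        ≤ ∑ x, ∑ y, (lam * (p x * Q₁ x y * Real.log (Q₁ x y / (∑ x', p x' * Q₁ x' y))) +
            (1 - lam) * (p x * Q₂ x y * Real.log (Q₂ x y / (∑ x', p x' * Q₂ x' y)))) :=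
          Finset.sum_le_sum fun x _ => Finset.sum_le_sum fun y _ => hterm x y
      _ = lam * r₁ + (1 - lam) * r₂ := by
          rw [hr₁v, hr₂v]
          simp only [Finset.mul_sum]
          rw [← Finset.sum_add_distrib]
          refine Finset.sum_congr rfl fun x _ => ?_
          rw [← Finset.sum_add_distrib]
  exact ⟨∑ x, ∑ y, p x * Q x y * Real.log (Q x y / (∑ x', p x' * Q x' y)),
    ⟨Q, hQnn, hQsum, hdist, hperc, rfl⟩, hval⟩

/-- If the divergence `Div` is convex in its second argument, the RDPF
`R(D,P)` is jointly convex in `(D,P)`. -/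
theorem rdpf_jointly_convex {X : Type*} [Fintype X]
    (p : X → ℝ) (hp : ∀ x, 0 ≤ p x) (hps : ∑ x, p x = 1)
    (d : X → X → ℝ) (hd : ∀ x y, 0 ≤ d x y)
    (Div : (X → ℝ) → (X → ℝ) → ℝ)
    (hDiv0 : ∀ a b, 0 ≤ Div a b)
    (hDivConv : ∀ a, ConvexOn ℝ Set.univ (fun q => Div a q))
    (R : ℝ → ℝ → ℝ)
    (hR : ∀ D P, R D P = sInf { r : ℝ | ∃ Q : X → X → ℝ,
        (∀ x y, 0 ≤ Q x y) ∧ (∀ x, ∑ y, Q x y = 1) ∧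
        (∑ x, ∑ y, p x * Q x y * d x y) ≤ D ∧
        Div p (fun y => ∑ x, p x * Q x y) ≤ P ∧
        r = ∑ x, ∑ y, p x * Q x y *
              Real.log (Q x y / (∑ x', p x' * Q x' y)) })
    (D₁ D₂ P₁ P₂ : ℝ)
    (hfeas₁ : ∃ Q : X → X → ℝ,
        (∀ x y, 0 ≤ Q x y) ∧ (∀ x, ∑ y, Q x y = 1) ∧
        (∑ x, ∑ y, p x * Q x y * d x y) ≤ D₁ ∧
        Div p (fun y => ∑ x, p x * Q x y) ≤ P₁)
    (hfeas₂ : ∃ Q : X → X → ℝ,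
        (∀ x y, 0 ≤ Q x y) ∧ (∀ x, ∑ y, Q x y = 1) ∧
        (∑ x, ∑ y, p x * Q x y * d x y) ≤ D₂ ∧
        Div p (fun y => ∑ x, p x * Q x y) ≤ P₂)
    (lam : ℝ) (hlam0 : 0 ≤ lam) (hlam1 : lam ≤ 1) :
    R (lam * D₁ + (1 - lam) * D₂) (lam * P₁ + (1 - lam) * P₂)
      ≤ lam * R D₁ P₁ + (1 - lam) * R D₂ P₂ := by
  have hR' : ∀ D P, R D P = sInf (FS p d Div D P) := hR
  rw [hR' (lam * D₁ + (1 - lam) * D₂) (lam * P₁ + (1 - lam) * P₂), hR' D₁ P₁, hR' D₂ P₂]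
  have hne₁ : (FS p d Div D₁ P₁).Nonempty := by
    obtain ⟨Q, h1, h2, h3, h4⟩ := hfeas₁
    exact ⟨_, Q, h1, h2, h3, h4, rfl⟩
  have hne₂ : (FS p d Div D₂ P₂).Nonempty := by
    obtain ⟨Q, h1, h2, h3, h4⟩ := hfeas₂
    exact ⟨_, Q, h1, h2, h3, h4, rfl⟩
  apply sInf_combine hne₁ hne₂ hlam0 hlam1
  intro r₁ hr₁ r₂ hr₂
  obtain ⟨r, hrmem, hrle⟩ := FS_combine p hp hps d Div hDivConv D₁ D₂ P₁ P₂
    lam hlam0 hlam1 r₁ r₂ hr₁ hr₂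
  exact le_trans (csInf_le (FS_bdd p hp hps d Div _ _) hrmem) hrle
end

section
/- For fixed strictly positive probability vector q on X̂ and fixed positive weights A(x,x̂), the function Q ↦ Σ_{x,x̂} p(x)Q(x̂|x)[log(Q(x̂|x)/q(x̂)) − log A(x,x̂)] over stochastic matrices Q is minimized by Q*(x̂|x) = q(x̂)A(x,x̂)/Σ_i q(i)A(x,i), and the minimum value equals −Σ_x p(x) log(Σ_{x̂} q(x̂)A(x,x̂)). -/
open Finset

private lemma term_ge {a c : ℝ} (ha : 0 ≤ a) (hc : 0 < c) :
    a - c ≤ a * Real.log (a / c) := by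
  rcases eq_or_lt_of_le ha with h | h
  · simp [← h]; linarith
  · have h1 : Real.log (c / a) ≤ c / a - 1 := Real.log_le_sub_one_of_pos (by positivity)
    have h2 : Real.log (a / c) = - Real.log (c / a) := by
      rw [← Real.log_inv]; congr 1; field_simp
    have h3 : a * Real.log (c / a) ≤ a * (c / a - 1) :=
      mul_le_mul_of_nonneg_left h1 ha
    have h4 : a * (c / a - 1) = c - a := by field_simp
    rw [h2]; nlinarith

private lemma gibbs {Y : Type*} [Fintype Y] (a c : Y → ℝ)
    (ha : ∀ y, 0 ≤ a y) (hc : ∀ y, 0 < c y)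
    (has : ∑ y, a y = 1) (hcs : ∑ y, c y = 1) :
    0 ≤ ∑ y, a y * Real.log (a y / c y) := by
  have h : ∑ y, (a y - c y) ≤ ∑ y, a y * Real.log (a y / c y) :=
    Finset.sum_le_sum fun y _ => term_ge (ha y) (hc y)
  simpa [Finset.sum_sub_distrib, has, hcs] using h

/-- Row-wise key inequality. -/
private lemma row_ineq {Y : Type*} [Fintype Y] [Nonempty Y] (q : Y → ℝ) (hq : ∀ y, 0 < q y)
    (a : Y → ℝ) (hA : ∀ y, 0 < a y)
    (r : Y → ℝ) (hr : ∀ y, 0 ≤ r y) (hrs : ∑ y, r y = 1) :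
    - Real.log (∑ y, q y * a y) ≤
      ∑ y, r y * (Real.log (r y / q y) - Real.log (a y)) := by
  set Z : ℝ := ∑ y, q y * a y with hZ
  have hZpos : 0 < Z := Finset.sum_pos (fun y _ => mul_pos (hq y) (hA y)) univ_nonempty
  set c : Y → ℝ := fun y => q y * a y / Z with hc
  have hcpos : ∀ y, 0 < c y := fun y => div_pos (mul_pos (hq y) (hA y)) hZpos
  have hcs : ∑ y, c y = 1 := by
    rw [hc]; rw [← Finset.sum_div]; field_simp; exact hZ.symm
  have key : ∀ y, r y * (Real.log (r y / q y) - Real.log (a y)) =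
      r y * Real.log (r y / c y) - r y * Real.log Z := by
    intro y
    rcases eq_or_lt_of_le (hr y) with h | h
    · simp [← h]
    · have hry : r y ≠ 0 := ne_of_gt h
      have hlc : Real.log (c y) = Real.log (q y) + Real.log (a y) - Real.log Z := by
        rw [hc]
        rw [Real.log_div (ne_of_gt (mul_pos (hq y) (hA y))) (ne_of_gt hZpos),
          Real.log_mul (ne_of_gt (hq y)) (ne_of_gt (hA y))]
      rw [Real.log_div hry (ne_of_gt (hcpos y)), Real.log_div hry (ne_of_gt (hq y)), hlc]
      ring
  have hsum : ∑ y, r y * (Real.log (r y / q y) - Real.log (a y)) =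
      (∑ y, r y * Real.log (r y / c y)) - Real.log Z := by
    rw [Finset.sum_congr rfl fun y _ => key y, Finset.sum_sub_distrib,
      ← Finset.sum_mul, hrs, one_mul]
  rw [hsum]
  have := gibbs r c hr hcpos hrs hcs
  linarith

/-- The Q-step of the alternating minimization: for fixed strictly positive
`q` and positive weights `A`, the objective
`Q ↦ ∑_{x,x̂} p x * Q x x̂ * (log (Q x x̂ / q x̂) - log (A x x̂))` over
stochastic matrices is minimized by
`Q* x x̂ = q x̂ * A x x̂ / ∑ i, q i * A x i`, with minimum value
`-∑ x, p x * log (∑ x̂, q x̂ * A x x̂)`. -/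
theorem q_step_minimizer {X Y : Type*} [Fintype X] [Fintype Y]
    (p : X → ℝ) (hp : ∀ x, 0 ≤ p x) (hps : ∑ x, p x = 1)
    (q : Y → ℝ) (hq : ∀ y, 0 < q y) (hqs : ∑ y, q y = 1)
    (A : X → Y → ℝ) (hA : ∀ x y, 0 < A x y) :
    (∀ Q : X → Y → ℝ, (∀ x y, 0 ≤ Q x y) → (∀ x, ∑ y, Q x y = 1) →
      (∑ x, ∑ y, p x * Q x y * (Real.log (Q x y / q y) - Real.log (A x y)))
        ≥ - ∑ x, p x * Real.log (∑ y, q y * A x y)) ∧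
    (∑ x, ∑ y, p x * (q y * A x y / ∑ i, q i * A x i) *
        (Real.log ((q y * A x y / ∑ i, q i * A x i) / q y) - Real.log (A x y)))
      = - ∑ x, p x * Real.log (∑ y, q y * A x y) := by
  have : Nonempty Y := by
    rcases isEmpty_or_nonempty Y with h | h
    · simp at hqs
    · exact h
  have hZpos : ∀ x, (0:ℝ) < ∑ y, q y * A x y := fun x =>
    Finset.sum_pos (fun y _ => mul_pos (hq y) (hA x y)) univ_nonempty
  constructor
  · intro Q hQ hQs
    have h1 : ∀ x, p x * (- Real.log (∑ y, q y * A x y)) ≤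
        ∑ y, p x * Q x y * (Real.log (Q x y / q y) - Real.log (A x y)) := by
      intro x
      have := row_ineq q hq (A x) (hA x) (Q x) (hQ x) (hQs x)
      calc p x * (- Real.log (∑ y, q y * A x y))
          ≤ p x * ∑ y, Q x y * (Real.log (Q x y / q y) - Real.log (A x y)) :=
            mul_le_mul_of_nonneg_left this (hp x)
        _ = ∑ y, p x * Q x y * (Real.log (Q x y / q y) - Real.log (A x y)) := by
            rw [Finset.mul_sum]; exact Finset.sum_congr rfl fun y _ => by ring
    have := Finset.sum_le_sum fun x (_ : x ∈ univ) => h1 x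
    have heq : ∑ x, p x * (- Real.log (∑ y, q y * A x y)) =
        - ∑ x, p x * Real.log (∑ y, q y * A x y) := by
      rw [← Finset.sum_neg_distrib]; exact Finset.sum_congr rfl fun x _ => by ring
    rw [heq] at this
    exact this
  · have hrow : ∀ x, ∑ y, p x * (q y * A x y / ∑ i, q i * A x i) *
        (Real.log ((q y * A x y / ∑ i, q i * A x i) / q y) - Real.log (A x y))
        = - (p x * Real.log (∑ y, q y * A x y)) := by
      intro x
      set Z : ℝ := ∑ i, q i * A x i with hZ
      have hZp : 0 < Z := hZpos x
      have term : ∀ y, p x * (q y * A x y / Z) *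
          (Real.log ((q y * A x y / Z) / q y) - Real.log (A x y))
          = p x * (q y * A x y / Z) * (- Real.log Z) := by
        intro y
        congr 1
        have : (q y * A x y / Z) / q y = A x y / Z := by
          rw [div_div, mul_comm Z (q y), ← div_div, mul_comm (q y) (A x y),
            mul_div_assoc, div_self (ne_of_gt (hq y)), mul_one]
        rw [this, Real.log_div (ne_of_gt (hA x y)) (ne_of_gt hZp)]
        ring
      rw [Finset.sum_congr rfl fun y _ => term y]
      have hs : ∑ y, q y * A x y / Z = 1 := by
        rw [← Finset.sum_div]; field_simp; exact hZ.symm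
      calc ∑ y, p x * (q y * A x y / Z) * (- Real.log Z)
          = (p x * (- Real.log Z)) * ∑ y, q y * A x y / Z := by
            rw [Finset.mul_sum]; exact Finset.sum_congr rfl fun y _ => by ring
        _ = - (p x * Real.log Z) := by rw [hs]; ring
    rw [Finset.sum_congr rfl fun x _ => hrow x, Finset.sum_neg_distrib]
end

section
/- (Lemma 6: eigenvalues of M are positive under full-rank distortion kernel) Let M be the |X̂|×|X̂| matrix with entries M(i,j) = q*(i) Σ_x p(x) A(x,i)A(x,j)/(Σ_k q*(k)A(x,k))², where p and q* are strictly positive probability vectors and A(x,x̂) = e^{−s₁d(x,x̂)}·e^{−s₂g(x̂)} with the matrix [e^{−s₁d(x,x̂)}] full rank. Then all eigenvalues of M are real and strictly positive. -/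
open Finset

/-- Lemma 6: if the kernel `[exp (-s₁ d x x̂)]` is invertible, then all
eigenvalues of `M i j = q* i * ∑ x, p x * A x i * A x j / (∑ k, q* k * A x k)^2`
(with `A x x̂ = exp (-s₁ d x x̂ - s₂ g x̂)`) are real and strictly positive. -/
theorem eigenvalues_of_M_positive {X : Type*} [Fintype X] [DecidableEq X]
    (p : X → ℝ) (hp : ∀ x, 0 < p x) (hps : ∑ x, p x = 1)
    (qs : X → ℝ) (hqs : ∀ x, 0 < qs x) (hqss : ∑ x, qs x = 1)
    (s₁ s₂ : ℝ) (hs₁ : 0 ≤ s₁) (hs₂ : 0 ≤ s₂)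
    (d : X → X → ℝ) (hd : ∀ x y, 0 ≤ d x y) (g : X → ℝ)
    (hfull : (Matrix.of fun x y => Real.exp (-s₁ * d x y)).det ≠ 0)
    (A : X → X → ℝ) (hA : ∀ x y, A x y = Real.exp (-s₁ * d x y - s₂ * g y))
    (M : Matrix X X ℝ)
    (hM : ∀ i j, M i j =
      qs i * ∑ x, p x * A x i * A x j / (∑ k, qs k * A x k) ^ 2) :
    ∀ (μ : ℂ) (v : X → ℂ), v ≠ 0 →
      (M.map (fun r => (r : ℂ))).mulVec v = μ • v → μ.im = 0 ∧ 0 < μ.re := by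
  intro μ v hv hmv
  classical
  have hApos : ∀ x y, 0 < A x y := fun x y => by rw [hA x y]; exact Real.exp_pos _
  have hXne : Nonempty X := by
    by_contra h
    rw [not_nonempty_iff] at h
    simp [Finset.univ_eq_empty] at hps
  set den : X → ℝ := fun x => ∑ k, qs k * A x k with hden
  have hdenpos : ∀ x, 0 < den x :=
    fun x => Finset.sum_pos (fun k _ => mul_pos (hqs k) (hApos x k)) Finset.univ_nonempty
  set w : X → ℝ := fun x => p x / den x ^ 2 with hw
  have hwpos : ∀ x, 0 < w x := fun x => div_pos (hp x) (pow_pos (hdenpos x) 2)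
  set B : X → ℂ := fun x => ∑ j, (A x j : ℂ) * v j with hB
  -- B is not identically zero since A is invertible
  have hBne : ∃ x, B x ≠ 0 := by
    by_contra h
    push_neg at h
    apply hv
    have hdetA : (Matrix.of A).det ≠ 0 := by
      have hfac : (Matrix.of A)
          = (Matrix.of fun x y => Real.exp (-s₁ * d x y)) *
            Matrix.diagonal (fun y => Real.exp (-(s₂ * g y))) := by
        ext x y
        simp [Matrix.mul_diagonal, hA x y, sub_eq_add_neg, Real.exp_add]
      rw [hfac, Matrix.det_mul, Matrix.det_diagonal]
      exact mul_ne_zero hfull (Finset.prod_ne_zero_iff.mpr fun y _ => (Real.exp_pos _).ne')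
    have hdetC : ((Matrix.of A).map ((↑) : ℝ → ℂ)).det ≠ 0 := by
      have h2 : ((Matrix.of A).map ((↑) : ℝ → ℂ)).det = (((Matrix.of A).det : ℝ) : ℂ) := by
        rw [show ((Matrix.of A).map ((↑) : ℝ → ℂ))
            = Complex.ofRealHom.mapMatrix (Matrix.of A) from rfl, ← RingHom.map_det]
        rfl
      rw [h2]
      exact_mod_cast hdetA
    refine Matrix.eq_zero_of_mulVec_eq_zero hdetC ?_
    funext x
    simpa [Matrix.mulVec, dotProduct, Matrix.map_apply, hB] using h x
  have hqC : ∀ i, (qs i : ℂ) ≠ 0 := fun i => by exact_mod_cast (hqs i).ne'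
  have hdC : ∀ x, (den x : ℂ) ≠ 0 := fun x => by exact_mod_cast (hdenpos x).ne'
  have key : μ * ∑ i, ((qs i : ℂ))⁻¹ * ((starRingEnd ℂ) (v i) * v i)
      = ∑ x, (w x : ℂ) * ((starRingEnd ℂ) (B x) * B x) := by
    have h1 : ∀ i, ∑ j, ((M i j : ℂ)) * v j = μ * v i := by
      intro i
      have := congrFun hmv i
      simpa [Matrix.mulVec, dotProduct, Matrix.map_apply] using this
    calc μ * ∑ i, ((qs i : ℂ))⁻¹ * ((starRingEnd ℂ) (v i) * v i)
        = ∑ i, ((qs i : ℂ))⁻¹ * (starRingEnd ℂ) (v i) * ∑ j, ((M i j : ℂ)) * v j := by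
          rw [Finset.mul_sum]
          exact Finset.sum_congr rfl fun i _ => by rw [h1]; ring
      _ = ∑ i, ∑ j, ∑ x,
            ((qs i : ℂ))⁻¹ * (starRingEnd ℂ) (v i) *
              ((qs i : ℂ) * ((p x : ℂ) * (A x i : ℂ) * (A x j : ℂ) / (den x : ℂ) ^ 2)) * v j := by
          refine Finset.sum_congr rfl fun i _ => ?_
          rw [Finset.mul_sum]
          refine Finset.sum_congr rfl fun j _ => ?_
          rw [hM i j]
          have hdenC : ∀ x, ((den x : ℝ) : ℂ) = ∑ k, (qs k : ℂ) * (A x k : ℂ) := by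
            intro x
            rw [hden]
            push_cast
            rfl
          push_cast
          simp only [← hdenC]
          simp only [Finset.sum_mul, Finset.mul_sum]
          refine Finset.sum_congr rfl fun x _ => ?_
          ring
      _ = ∑ i, ∑ j, ∑ x,
            (w x : ℂ) * ((A x i : ℂ) * (starRingEnd ℂ) (v i)) * ((A x j : ℂ) * v j) := by
          refine Finset.sum_congr rfl fun i _ => Finset.sum_congr rfl fun j _ =>
            Finset.sum_congr rfl fun x _ => ?_
          simp only [hw]
          push_cast
          field_simp [hqC i, hdC x]
      _ = ∑ x, ∑ i, ∑ j,
            (w x : ℂ) * ((A x i : ℂ) * (starRingEnd ℂ) (v i)) * ((A x j : ℂ) * v j) := by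
          rw [show (∑ i, ∑ j, ∑ x,
              (w x : ℂ) * ((A x i : ℂ) * (starRingEnd ℂ) (v i)) * ((A x j : ℂ) * v j))
              = ∑ i, ∑ x, ∑ j,
              (w x : ℂ) * ((A x i : ℂ) * (starRingEnd ℂ) (v i)) * ((A x j : ℂ) * v j)
            from Finset.sum_congr rfl fun i _ => Finset.sum_comm]
          exact Finset.sum_comm
      _ = ∑ x, (w x : ℂ) * ((starRingEnd ℂ) (B x) * B x) := by
          refine Finset.sum_congr rfl fun x _ => ?_
          have hconjB : (starRingEnd ℂ) (B x) = ∑ i, (A x i : ℂ) * (starRingEnd ℂ) (v i) := by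
            simp [hB, map_sum, Complex.conj_ofReal]
          rw [hconjB]
          simp only [hB]
          rw [Finset.sum_mul_sum, Finset.mul_sum]
          refine Finset.sum_congr rfl fun i _ => ?_
          rw [Finset.mul_sum]
          refine Finset.sum_congr rfl fun j _ => ?_
          ring
  -- rewrite both sides as real casts
  set T : ℝ := ∑ i, (qs i)⁻¹ * Complex.normSq (v i) with hT
  set S : ℝ := ∑ x, w x * Complex.normSq (B x) with hS
  have hTc : (∑ i, ((qs i : ℂ))⁻¹ * ((starRingEnd ℂ) (v i) * v i)) = (T : ℂ) := by
    rw [hT]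
    push_cast
    refine Finset.sum_congr rfl fun i _ => ?_
    rw [mul_comm ((starRingEnd ℂ) (v i)), Complex.mul_conj]
  have hSc : (∑ x, (w x : ℂ) * ((starRingEnd ℂ) (B x) * B x)) = (S : ℂ) := by
    rw [hS]
    push_cast
    refine Finset.sum_congr rfl fun x _ => ?_
    rw [mul_comm ((starRingEnd ℂ) (B x)), Complex.mul_conj]
  rw [hTc, hSc] at key
  obtain ⟨i₀, hi₀⟩ := Function.ne_iff.mp hv
  have hTpos : 0 < T := by
    refine Finset.sum_pos' (fun i _ => ?_) ⟨i₀, Finset.mem_univ _, ?_⟩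
    · exact mul_nonneg (inv_nonneg.mpr (hqs i).le) (Complex.normSq_nonneg _)
    · exact mul_pos (inv_pos.mpr (hqs i₀)) (Complex.normSq_pos.mpr hi₀)
  obtain ⟨x₀, hx₀⟩ := hBne
  have hSpos : 0 < S := by
    refine Finset.sum_pos' (fun x _ => ?_) ⟨x₀, Finset.mem_univ _, ?_⟩
    · exact mul_nonneg (hwpos x).le (Complex.normSq_nonneg _)
    · exact mul_pos (hwpos x₀) (Complex.normSq_pos.mpr hx₀)
  have hμ : μ = ((S / T : ℝ) : ℂ) := by
    have hTne : (T : ℂ) ≠ 0 := by exact_mod_cast hTpos.ne'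
    field_simp
    push_cast
    rw [eq_div_iff hTne]
    exact key
  rw [hμ]
  constructor
  · simp
  · simpa using div_pos hSpos hTpos
end

section
/- (Lemma 7: eigenvalues of M are at most 1 at a fixed point) Let M(i,j) = q*(i) Σ_x p(x)A(x,i)A(x,j)/(Σ_k q*(k)A(x,k))², where q* is a fixed point of the BA update, i.e., Σ_x p(x)A(x,x̂)/Σ_k q*(k)A(x,k) = 1 for every x̂ in the support of q*, with q* strictly positive. Then every eigenvalue λ of M satisfies λ ≤ 1. -/
open Finset

/-- Lemma 7: at a fixed point `q*` of the BA update (i.e. `c x̂ = 1` for all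
`x̂`), every real eigenvalue `μ` of the matrix
`M i j = q* i * ∑ x, p x * A x i * A x j / (∑ k, q* k * A x k)^2`
satisfies `μ ≤ 1`. -/
theorem eigenvalues_of_M_le_one {X : Type*} [Fintype X]
    (p : X → ℝ) (hp : ∀ x, 0 < p x) (hps : ∑ x, p x = 1)
    (A : X → X → ℝ) (hA : ∀ x y, 0 < A x y)
    (qs : X → ℝ) (hqs : ∀ x, 0 < qs x) (hqss : ∑ x, qs x = 1)
    (hfix : ∀ y, ∑ x, p x * A x y / (∑ k, qs k * A x k) = 1)
    (M : Matrix X X ℝ)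
    (hM : ∀ i j, M i j =
      qs i * ∑ x, p x * A x i * A x j / (∑ k, qs k * A x k) ^ 2) :
    ∀ (μ : ℝ) (v : X → ℝ), v ≠ 0 → M.mulVec v = μ • v → μ ≤ 1 := by
  intro μ v hv hev
  obtain ⟨i0, hi0⟩ := Function.ne_iff.mp hv
  haveI : Nonempty X := ⟨i0⟩
  have hDpos : ∀ x, 0 < ∑ k, qs k * A x k := fun x =>
    Finset.sum_pos (fun k _ => mul_pos (hqs k) (hA x k)) Finset.univ_nonempty
  have hMnn : ∀ i j, 0 ≤ M i j := by
    intro i j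
    rw [hM]
    refine mul_nonneg (hqs i).le (Finset.sum_nonneg fun x _ => ?_)
    have := hDpos x
    have := hp x
    have := hA x i
    have := hA x j
    positivity
  have hcol : ∀ j, ∑ i, M i j = 1 := by
    intro j
    calc ∑ i, M i j
        = ∑ i, ∑ x, qs i * A x i * (p x * A x j / (∑ k, qs k * A x k) ^ 2) := by
          refine Finset.sum_congr rfl fun i _ => ?_
          rw [hM, Finset.mul_sum]
          refine Finset.sum_congr rfl fun x _ => ?_
          ring
      _ = ∑ x, ∑ i, qs i * A x i * (p x * A x j / (∑ k, qs k * A x k) ^ 2) :=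
          Finset.sum_comm
      _ = ∑ x, p x * A x j / (∑ k, qs k * A x k) := by
          refine Finset.sum_congr rfl fun x _ => ?_
          rw [← Finset.sum_mul]
          have hD := (hDpos x).ne'
          field_simp
      _ = 1 := hfix j
  -- ℓ¹ argument
  set S : ℝ := ∑ i, |v i| with hS
  have hSpos : 0 < S := by
    refine Finset.sum_pos' (fun i _ => abs_nonneg _) ⟨i0, Finset.mem_univ _, ?_⟩
    exact abs_pos.mpr hi0
  have key : |μ| * S ≤ S := by
    have h1 : ∀ i, |μ * v i| = |(M.mulVec v) i| := by
      intro i; rw [hev]; rfl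
    calc |μ| * S = ∑ i, |μ * v i| := by
          rw [hS, Finset.mul_sum]
          exact Finset.sum_congr rfl fun i _ => (abs_mul μ (v i)).symm
      _ = ∑ i, |∑ j, M i j * v j| := by
          refine Finset.sum_congr rfl fun i _ => ?_
          rw [h1 i]; rfl
      _ ≤ ∑ i, ∑ j, M i j * |v j| := by
          refine Finset.sum_le_sum fun i _ => ?_
          refine (Finset.abs_sum_le_sum_abs _ _).trans ?_
          refine Finset.sum_le_sum fun j _ => ?_
          rw [abs_mul, abs_of_nonneg (hMnn i j)]
      _ = ∑ j, (∑ i, M i j) * |v j| := by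
          rw [Finset.sum_comm]
          exact Finset.sum_congr rfl fun j _ => (Finset.sum_mul _ _ _).symm
      _ = S := by
          rw [hS]
          exact Finset.sum_congr rfl fun j _ => by rw [hcol j, one_mul]
  have : |μ| ≤ 1 := by
    by_contra h
    push_neg at h
    nlinarith
  linarith [le_abs_self μ]
end
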